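/- Vanishing steps and gradients of gradient descent: let E be a real inner product space, f : E → ℝ differentiable with K-Lipschitz gradient (K > 0) and bounded below. Fix a step size η with 0 < η ≤ 1/K and define the iterates x₀ ∈ E, x_{t+1} = x_t − η·∇f(x_t). Then the successive differences converge to zero, x_{t+1} − x_t → 0 as t → ∞, and the gradients converge to zero, ∇f(x_t) → 0 as t → ∞. -/

import Mathlib

open Filter

local notation "⟪" x ", " y "⟫" => @inner ℝ _ _ x y

/-- Derivative of `t ↦ f (x + t • v)`. -/
lemma hasDerivAt_comp_line {E : Type*} [NormedAddCommGroup E] [InnerProductSpace ℝ E] [CompleteSpace E]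
    {f : E → ℝ} (hf : Differentiable ℝ f) (x v : E) (t : ℝ) :
    HasDerivAt (fun s : ℝ => f (x + s • v)) ⟪gradient f (x + t • v), v⟫ t := by
  have hc : HasDerivAt (fun s : ℝ => x + s • v) v t := by
    simpa using ((hasDerivAt_id t).smul_const v).const_add x
  have hg := (hf (x + t • v)).hasGradientAt
  rw [hasGradientAt_iff_hasFDerivAt] at hg
  have := hg.comp_hasDerivAt t hc
  exact this.congr_deriv (by simp [InnerProductSpace.toDual_apply_apply])

/-- Descent lemma. -/
lemma descent_lemma {E : Type*} [NormedAddCommGroup E] [InnerProductSpace ℝ E] [CompleteSpace E]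
    {f : E → ℝ} {K : ℝ} (hK : 0 ≤ K)
    (hf : Differentiable ℝ f)
    (hlip : ∀ x y : E, ‖gradient f x - gradient f y‖ ≤ K * ‖x - y‖)
    (x v : E) :
    f (x + v) ≤ f x + ⟪gradient f x, v⟫ + K / 2 * ‖v‖ ^ 2 := by
  set h : ℝ → ℝ := fun t => f (x + t • v) - t * ⟪gradient f x, v⟫ - K / 2 * t ^ 2 * ‖v‖ ^ 2 with hh
  have hderiv : ∀ t : ℝ, HasDerivAt h
      (⟪gradient f (x + t • v), v⟫ - ⟪gradient f x, v⟫ - K * t * ‖v‖ ^ 2) t := by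
    intro t
    have h1 := hasDerivAt_comp_line hf x v t
    have h2 : HasDerivAt (fun s : ℝ => s * ⟪gradient f x, v⟫) ⟪gradient f x, v⟫ t := by
      simpa using (hasDerivAt_id t).mul_const ⟪gradient f x, v⟫
    have h3 : HasDerivAt (fun s : ℝ => K / 2 * s ^ 2 * ‖v‖ ^ 2) (K * t * ‖v‖ ^ 2) t := by
      have := ((hasDerivAt_pow 2 t).const_mul (K / 2)).mul_const (‖v‖ ^ 2)
      exact this.congr_deriv (by push_cast; ring)
    exact (h1.sub h2).sub h3
  have hanti : AntitoneOn h (Set.Icc 0 1) := by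
    apply antitoneOn_of_deriv_nonpos (convex_Icc 0 1)
    · exact fun t _ => ((hderiv t).continuousAt).continuousWithinAt
    · exact fun t _ => ((hderiv t).differentiableAt).differentiableWithinAt
    · intro t ht
      rw [interior_Icc] at ht
      rw [(hderiv t).deriv]
      have key : ⟪gradient f (x + t • v) - gradient f x, v⟫ ≤ K * t * ‖v‖ ^ 2 := by
        calc ⟪gradient f (x + t • v) - gradient f x, v⟫
            ≤ ‖gradient f (x + t • v) - gradient f x‖ * ‖v‖ := real_inner_le_norm _ _
          _ ≤ (K * ‖(x + t • v) - x‖) * ‖v‖ := by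
              gcongr; exact hlip _ _
          _ = K * t * ‖v‖ ^ 2 := by
              rw [add_sub_cancel_left, norm_smul]
              simp [Real.norm_eq_abs, abs_of_pos ht.1]
              ring
      have := inner_sub_left (𝕜 := ℝ) (gradient f (x + t • v)) (gradient f x) v
      linarith [key, this.symm.le, this.le]
  have h10 : h 1 ≤ h 0 := hanti (by norm_num) (by norm_num) zero_le_one
  simp only [hh, one_smul, zero_smul, add_zero, one_pow, one_mul, zero_mul, zero_pow,
    mul_zero, sub_zero] at h10
  linarith

/-- Vanishing steps and gradients of gradient descent: with step size
`0 < η ≤ 1/K` and iterates `x_{t+1} = x_t − η·∇f(x_t)` for a bounded-below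
`K`-smooth `f`, both `x_{t+1} − x_t → 0` and `∇f(x_t) → 0`. -/
theorem stmt_10 {E : Type*} [NormedAddCommGroup E] [InnerProductSpace ℝ E]
    [CompleteSpace E]
    (f : E → ℝ) (K : ℝ) (hK : 0 < K)
    (hf : Differentiable ℝ f)
    (hlip : ∀ x y : E, ‖gradient f x - gradient f y‖ ≤ K * ‖x - y‖)
    (hbdd : ∃ c : ℝ, ∀ y : E, c ≤ f y)
    (η : ℝ) (hη : 0 < η) (hηK : η ≤ 1 / K)
    (x : ℕ → E) (hx : ∀ t, x (t + 1) = x t - η • gradient f (x t)) :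
    Tendsto (fun t => x (t + 1) - x t) atTop (nhds 0) ∧
    Tendsto (fun t => gradient f (x t)) atTop (nhds 0) := by
  obtain ⟨c, hc⟩ := hbdd
  set g : ℕ → E := fun t => gradient f (x t) with hg
  -- descent inequality per step
  have step : ∀ t : ℕ, f (x (t + 1)) ≤ f (x t) - η / 2 * ‖g t‖ ^ 2 := by
    intro t
    have hd := descent_lemma hK.le hf hlip (x t) (-(η • g t))
    have hx' : x (t + 1) = x t + (-(η • g t)) := by rw [hx t]; abel
    rw [← hx'] at hd
    have hinner : ⟪gradient f (x t), -(η • g t)⟫ = -(η * ‖g t‖ ^ 2) := by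
      rw [inner_neg_right, real_inner_smul_right, real_inner_self_eq_norm_sq]
    have hnorm : ‖-(η • g t)‖ ^ 2 = η ^ 2 * ‖g t‖ ^ 2 := by
      rw [norm_neg, norm_smul, Real.norm_eq_abs, abs_of_pos hη, mul_pow]
    rw [hinner, hnorm] at hd
    have hKη : K * η ≤ 1 := by
      rw [le_div_iff₀ hK] at hηK; linarith
    have : K / 2 * (η ^ 2 * ‖g t‖ ^ 2) ≤ η / 2 * ‖g t‖ ^ 2 := by
      have h1 : K / 2 * (η ^ 2 * ‖g t‖ ^ 2) = (K * η) * (η / 2 * ‖g t‖ ^ 2) := by ring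
      have h2 : (K * η) * (η / 2 * ‖g t‖ ^ 2) ≤ 1 * (η / 2 * ‖g t‖ ^ 2) := by
        apply mul_le_mul_of_nonneg_right hKη
        positivity
      rw [h1]; linarith
    linarith
  have hmono : Antitone (fun t => f (x t)) := by
    apply antitone_nat_of_succ_le
    intro t
    have := step t
    nlinarith [sq_nonneg ‖g t‖, hη.le]
  have hbdd2 : BddBelow (Set.range fun t => f (x t)) := ⟨c, by rintro _ ⟨t, rfl⟩; exact hc _⟩
  have hconv : Tendsto (fun t => f (x t)) atTop (nhds (⨅ t, f (x t))) :=
    tendsto_atTop_ciInf hmono hbdd2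
  have hdiff : Tendsto (fun t => f (x t) - f (x (t + 1))) atTop (nhds 0) := by
    have h2 : Tendsto (fun t => f (x (t + 1))) atTop (nhds (⨅ t, f (x t))) :=
      hconv.comp (tendsto_add_atTop_nat 1)
    simpa using hconv.sub h2
  have hsq : Tendsto (fun t => ‖g t‖ ^ 2) atTop (nhds 0) := by
    have hle : ∀ t, η / 2 * ‖g t‖ ^ 2 ≤ f (x t) - f (x (t + 1)) := fun t => by linarith [step t]
    have h0 : ∀ t, (0:ℝ) ≤ η / 2 * ‖g t‖ ^ 2 := fun t => by positivity
    have := squeeze_zero h0 hle hdiff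
    have hc2 : Tendsto (fun t => (2 / η) * (η / 2 * ‖g t‖ ^ 2)) atTop (nhds ((2/η) * 0)) :=
      this.const_mul _
    simp only [mul_zero] at hc2
    convert hc2 using 2 with t
    field_simp
  have hgnorm : Tendsto (fun t => ‖g t‖) atTop (nhds 0) := by
    have := hsq.sqrt
    simp only [Real.sqrt_zero] at this
    convert this using 2 with t
    rw [Real.sqrt_sq (norm_nonneg _)]
  have hgz : Tendsto (fun t => g t) atTop (nhds 0) := by
    rw [tendsto_zero_iff_norm_tendsto_zero]; exact hgnorm
  refine ⟨?_, hgz⟩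
  have : (fun t => x (t + 1) - x t) = fun t => -(η • g t) := by
    funext t; rw [hx t]; abel
  rw [this]
  simpa using (hgz.const_smul η).neg
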